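/- Let a, b, c, s and r_1,…,r_s be positive integers with a ≤ b ≤ c and a + b ≥ c + 2. Then N(K_{r_1,…,r_s}, K_1 ∨ (K_{a-1} + K_{b-1})) ≤ N(K_{r_1,…,r_s}, K_1 ∨ (K_{c-1} + K_{a+b-c-1})). -/

import Mathlib

open SimpleGraph

/-- `N(H, G)`: the number of subgraphs of `G` isomorphic to `H`. -/
noncomputable def copyCount {α β : Type*} (H : SimpleGraph α) (G : SimpleGraph β) : ℕ :=
  Nat.card {G' : G.Subgraph // Nonempty (G'.coe ≃g H)}

/-- The complete multipartite graph `K_{r 0, …, r (s-1)}` with parts of sizes `r i`. -/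
abbrev KR {s : ℕ} (r : Fin s → ℕ) : SimpleGraph (Σ i : Fin s, Fin (r i)) :=
  completeMultipartiteGraph fun i => Fin (r i)

/-- Adjacency pattern of `G(n,c,k)` on indices: the first `k` indices are dominating and
the first `c+1-k` indices form a clique. -/
def gAdjNat (c k a b : ℕ) : Prop :=
  a < k ∨ b < k ∨ (a < c + 1 - k ∧ b < c + 1 - k)

/-- The graph `G(n,c,k) = K_k ∨ (K_{c+1-2k} + \overline{K_{n-c-1+k}})`: the first `k`
vertices are dominating, the first `c+1-k` vertices form a clique `K_k ∨ K_{c+1-2k}`, and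
the remaining `n-c-1+k` vertices are independent, adjacent exactly to the first `k`. -/
def gGraph (n c k : ℕ) : SimpleGraph (Fin n) where
  Adj v w := v ≠ w ∧ gAdjNat c k v.val w.val
  symm := by constructor; intro v w h; refine ⟨Ne.symm h.1, ?_⟩; unfold gAdjNat at *; tauto
  loopless := by constructor; intro v h; exact h.1 rfl

/-- `g_{r_1,…,r_s}(n,c,k)`: the number of copies of `K_{r_1,…,r_s}` in `G(n,c,k)`. -/
noncomputable def gCount {s : ℕ} (r : Fin s → ℕ) (n c k : ℕ) : ℕ :=
  _root_.copyCount (KR r) (gGraph n c k)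

/-- A graph has circumference `c` if it has a cycle of length `c` and no longer cycle. -/
def HasCircumference {V : Type*} (G : SimpleGraph V) (c : ℕ) : Prop :=
  (∃ (v : V) (w : G.Walk v v), w.IsCycle ∧ w.length = c) ∧
    ∀ (v : V) (w : G.Walk v v), w.IsCycle → w.length ≤ c

/-- A graph has detour order `p` if a longest path has `p` vertices. -/
def HasDetourOrder {V : Type*} (G : SimpleGraph V) (p : ℕ) : Prop :=
  (∃ (u v : V) (w : G.Walk u v), w.IsPath ∧ w.length + 1 = p) ∧
    ∀ (u v : V) (w : G.Walk u v), w.IsPath → w.length + 1 ≤ p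

/-- A graph is 2-connected if it has at least 3 vertices and deleting any single
vertex leaves a connected graph. -/
def TwoConnected {V : Type*} [Fintype V] (G : SimpleGraph V) : Prop :=
  3 ≤ Fintype.card V ∧ ∀ v : V, (G.induce ({v}ᶜ : Set V)).Connected

/-- A graph is traceable if it has a Hamiltonian path. -/
def Traceable {V : Type*} [DecidableEq V] (G : SimpleGraph V) : Prop :=
  ∃ (u v : V) (w : G.Walk u v), w.IsHamiltonian

/-- A graph has matching number `m` if it has a matching with `m` edges and no larger one. -/
def HasMatchingNumber {V : Type*} (G : SimpleGraph V) (m : ℕ) : Prop :=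
  (∃ M : G.Subgraph, M.IsMatching ∧ Nat.card M.edgeSet = m) ∧
    ∀ M : G.Subgraph, M.IsMatching → Nat.card M.edgeSet ≤ m

/-- The graph `K_1 ∨ (K_{a-1} + K_{b-1})` on `a + b - 1` vertices: vertex `0` is
dominating, vertices `1,…,a-1` form a clique, and vertices `a,…,a+b-2` form a clique. -/
def joinTwoCliques (a b : ℕ) : SimpleGraph (Fin (a + b - 1)) where
  Adj v w := v ≠ w ∧
    (v.val = 0 ∨ w.val = 0 ∨ (v.val < a ∧ w.val < a) ∨ (a ≤ v.val ∧ a ≤ w.val))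
  symm := by constructor; intro v w h; exact ⟨Ne.symm h.1, by tauto⟩
  loopless := by constructor; intro v h; exact h.1 rfl

namespace S6Aux

variable {V W : Type*} {G : SimpleGraph V} {G' : SimpleGraph W}

/-- Push a subgraph along a vertex map. -/
def push (K : G.Subgraph) (f : V → W)
    (hadj : ∀ ⦃u v⦄, K.Adj u v → G'.Adj (f u) (f v)) : G'.Subgraph where
  verts := f '' K.verts
  Adj x y := ∃ u v, K.Adj u v ∧ f u = x ∧ f v = y
  adj_sub := by rintro x y ⟨u, v, h, rfl, rfl⟩; exact hadj h
  edge_vert := by rintro x y ⟨u, v, h, rfl, rfl⟩; exact ⟨u, K.edge_vert h, rfl⟩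
  symm := by constructor; rintro x y ⟨u, v, h, rfl, rfl⟩; exact ⟨v, u, K.adj_symm h, rfl, rfl⟩

lemma push_verts (K : G.Subgraph) (f : V → W) (hadj) :
    (push (G' := G') K f hadj).verts = f '' K.verts := rfl

lemma push_adj (K : G.Subgraph) (f : V → W) (hadj) (x y : W) :
    (push (G' := G') K f hadj).Adj x y ↔ ∃ u v, K.Adj u v ∧ f u = x ∧ f v = y := Iff.rfl

noncomputable def pushIso (K : G.Subgraph) (f : V → W) (hadj)
    (hinj : Set.InjOn f K.verts) : K.coe ≃g (push (G' := G') K f hadj).coe where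
  toEquiv := Equiv.Set.imageOfInjOn f K.verts hinj
  map_rel_iff' := by
    rintro ⟨u, hu⟩ ⟨v, hv⟩
    simp only [Equiv.Set.imageOfInjOn, Equiv.coe_fn_mk, Subgraph.coe_adj]
    constructor
    · rintro ⟨u', v', h, hu', hv'⟩
      have hu'' : u' = u := hinj (K.edge_vert h) hu hu'
      have hv'' : v' = v := hinj (K.edge_vert (K.adj_symm h)) hv hv'
      rwa [hu'', hv''] at h
    · intro h; exact ⟨u, v, h, rfl, rfl⟩

lemma push_injective {S : Set V} {f : V → W} (hS : Set.InjOn f S)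
    {K L : G.Subgraph} (hKS : K.verts ⊆ S) (hLS : L.verts ⊆ S)
    (hadjK : ∀ ⦃u v⦄, K.Adj u v → G'.Adj (f u) (f v))
    (hadjL : ∀ ⦃u v⦄, L.Adj u v → G'.Adj (f u) (f v))
    (h : push K f hadjK = push L f hadjL) : K = L := by
  have hv : f '' K.verts = f '' L.verts := congrArg Subgraph.verts h
  have hA : (push (G' := G') K f hadjK).Adj = (push (G' := G') L f hadjL).Adj :=
    congrArg Subgraph.Adj h
  have hsub : ∀ (K' L' : G.Subgraph), K'.verts ⊆ S → L'.verts ⊆ S →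
      f '' K'.verts = f '' L'.verts → K'.verts ⊆ L'.verts := by
    intro K' L' hK' hL' him v hv'
    have hmem : f v ∈ f '' L'.verts := him ▸ ⟨v, hv', rfl⟩
    obtain ⟨w, hw, hfw⟩ := hmem
    rwa [hS (hL' hw) (hK' hv') hfw] at hw
  have hverts : K.verts = L.verts :=
    (hsub K L hKS hLS hv).antisymm (hsub L K hLS hKS hv.symm)
  refine Subgraph.ext hverts ?_
  have hdir : ∀ (K' L' : G.Subgraph) (hK' : K'.verts ⊆ S) (hL' : L'.verts ⊆ S)
      (hadjK' : ∀ ⦃u v⦄, K'.Adj u v → G'.Adj (f u) (f v))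
      (hadjL' : ∀ ⦃u v⦄, L'.Adj u v → G'.Adj (f u) (f v)),
      (push K' f hadjK').Adj = (push L' f hadjL').Adj → ∀ u v, K'.Adj u v → L'.Adj u v := by
    intro K' L' hK' hL' hadjK' hadjL' hA' u v h'
    have : (push (G' := G') L' f hadjL').Adj (f u) (f v) := hA' ▸ ⟨u, v, h', rfl, rfl⟩
    obtain ⟨u', v', h'', hu', hv'⟩ := this
    have hu : u' = u := hS (hL' (L'.edge_vert h'')) (hK' (K'.edge_vert h')) hu'
    have hvv : v' = v := hS (hL' (L'.edge_vert (L'.adj_symm h''))) (hK' (K'.edge_vert (K'.adj_symm h'))) hv'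
    rwa [hu, hvv] at h''
  ext u v
  exact ⟨hdir K L hKS hLS hadjK hadjL hA u v, hdir L K hLS hKS hadjL hadjK hA.symm u v⟩

lemma jtc_adj {a b : ℕ} {u v : Fin (a + b - 1)} :
    (joinTwoCliques a b).Adj u v ↔ u.val ≠ v.val ∧
      (u.val = 0 ∨ v.val = 0 ∨ (u.val < a ∧ v.val < a) ∨ (a ≤ u.val ∧ a ≤ v.val)) := by
  constructor
  · rintro ⟨h1, h2⟩; exact ⟨fun h => h1 (Fin.ext h), h2⟩
  · rintro ⟨h1, h2⟩; exact ⟨fun h => h1 (congrArg Fin.val h), h2⟩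

lemma KR_adj {s : ℕ} {r : Fin s → ℕ} {p q : Σ i : Fin s, Fin (r i)} :
    (KR r).Adj p q ↔ p.1 ≠ q.1 := by
  simp [completeMultipartiteGraph]

/-- Structure lemma: if a copy of a complete multipartite graph in
`joinTwoCliques a b` has a vertex strictly inside each of the two cliques
(other than the apex `0`), then all its edges are incident to the apex. -/
lemma coverage {a b s : ℕ} {r : Fin s → ℕ} {K : (joinTwoCliques a b).Subgraph}
    (e : K.coe ≃g KR r) {u w : Fin (a + b - 1)} (hu : u ∈ K.verts) (hw : w ∈ K.verts)
    (hu0 : u.val ≠ 0) (hua : u.val < a) (hwa : a ≤ w.val) :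
    ∀ ⦃x y⦄, K.Adj x y → x.val = 0 ∨ y.val = 0 := by
  have samePart : ∀ (z z' : Fin (a + b - 1)) (hz : z ∈ K.verts) (hz' : z' ∈ K.verts),
      ¬ (joinTwoCliques a b).Adj z z' → (e ⟨z, hz⟩).1 = (e ⟨z', hz'⟩).1 := by
    intro z z' hz hz' hna
    by_contra hne
    have hadj : (KR r).Adj (e ⟨z, hz⟩) (e ⟨z', hz'⟩) := KR_adj.mpr hne
    have hcoe : K.coe.Adj ⟨z, hz⟩ ⟨z', hz'⟩ := e.map_rel_iff.mp hadj
    exact hna (K.adj_sub hcoe)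
  have huw : (e ⟨u, hu⟩).1 = (e ⟨w, hw⟩).1 :=
    samePart _ _ _ _ (by rw [jtc_adj]; push_neg; omega)
  have key : ∀ (z : Fin (a + b - 1)) (hz : z ∈ K.verts), z.val ≠ 0 →
      (e ⟨z, hz⟩).1 = (e ⟨u, hu⟩).1 := by
    intro z hz hz0
    by_cases hza : z.val < a
    · have h1 : (e ⟨z, hz⟩).1 = (e ⟨w, hw⟩).1 :=
        samePart _ _ _ _ (by rw [jtc_adj]; push_neg; omega)
      rw [h1, ← huw]
    · exact samePart _ _ _ _ (by rw [jtc_adj]; push_neg; omega)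
  intro x y hxy
  by_contra hcon
  push_neg at hcon
  obtain ⟨hx0, hy0⟩ := hcon
  have hxv : x ∈ K.verts := K.edge_vert hxy
  have hyv : y ∈ K.verts := K.edge_vert (K.adj_symm hxy)
  have h1 : (e ⟨x, hxv⟩).1 = (e ⟨y, hyv⟩).1 := (key x hxv hx0).trans (key y hyv hy0).symm
  have hcoe : K.coe.Adj ⟨x, hxv⟩ ⟨y, hyv⟩ := hxy
  exact KR_adj.mp (e.map_rel_iff.mpr hcoe) h1

lemma glue_injective {α β : Type*} (p1 p2 p3 : α → Prop)
    [∀ K, Decidable (p1 K)] [∀ K, Decidable (p2 K)] [∀ K, Decidable (p3 K)]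
    (g0 : ∀ K, p1 K → β) (g1 : ∀ K, ¬p1 K → p2 K → β)
    (g2 : ∀ K, ¬p1 K → ¬p2 K → p3 K → β) (g3 : ∀ K, ¬p1 K → ¬p2 K → ¬p3 K → β)
    (rk : β → ℕ)
    (hr0 : ∀ K h, rk (g0 K h) = 0) (hr1 : ∀ K h h', rk (g1 K h h') = 1)
    (hr2 : ∀ K h h' h'', rk (g2 K h h' h'') = 2)
    (hr3 : ∀ K h h' h'', rk (g3 K h h' h'') = 3)
    (hi0 : ∀ K L hK hL, g0 K hK = g0 L hL → K = L)
    (hi1 : ∀ K L hK hK' hL hL', g1 K hK hK' = g1 L hL hL' → K = L)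
    (hi2 : ∀ K L h1 h2 h3 h1' h2' h3', g2 K h1 h2 h3 = g2 L h1' h2' h3' → K = L)
    (hi3 : ∀ K L h1 h2 h3 h1' h2' h3', g3 K h1 h2 h3 = g3 L h1' h2' h3' → K = L) :
    Function.Injective (fun K =>
      if h1 : p1 K then g0 K h1
      else if h2 : p2 K then g1 K h1 h2
      else if h3 : p3 K then g2 K h1 h2 h3 else g3 K h1 h2 h3) := by
  intro K L h
  simp only at h
  split_ifs at h
  all_goals
    first
      | exact hi0 _ _ _ _ h
      | exact hi1 _ _ _ _ _ _ h
      | exact hi2 _ _ _ _ _ _ _ _ h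
      | exact hi3 _ _ _ _ _ _ _ _ h
      | (have hrk := congrArg rk h
         simp only [hr0, hr1, hr2, hr3] at hrk
         exact absurd hrk (by omega))

open Classical in
/-- Classifier of subgraphs of the target graph, used to show the four pieces of the
injection have pairwise disjoint ranges. -/
noncomputable def rank (b c : ℕ) {n : ℕ} {G : SimpleGraph (Fin n)} (K : G.Subgraph) : ℕ :=
  if ∀ ⦃x y⦄, K.Adj x y → x.val = 0 ∨ y.val = 0 then 0
  else if ∃ x ∈ K.verts, c ≤ x.val then 1
  else if ∃ x ∈ K.verts, b ≤ x.val then 2 else 3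

variable {b c n : ℕ} {G : SimpleGraph (Fin n)} {K : G.Subgraph}

lemma rank_eq_zero (h : ∀ ⦃x y⦄, K.Adj x y → x.val = 0 ∨ y.val = 0) : rank b c K = 0 := by
  unfold rank; rw [if_pos h]

lemma rank_eq_one (h1 : ¬ ∀ ⦃x y⦄, K.Adj x y → x.val = 0 ∨ y.val = 0)
    (h2 : ∃ x ∈ K.verts, c ≤ x.val) : rank b c K = 1 := by
  unfold rank; rw [if_neg h1, if_pos h2]

lemma rank_eq_two (h1 : ¬ ∀ ⦃x y⦄, K.Adj x y → x.val = 0 ∨ y.val = 0)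
    (h2 : ∀ x ∈ K.verts, x.val < c) (h3 : ∃ x ∈ K.verts, b ≤ x.val) : rank b c K = 2 := by
  unfold rank
  rw [if_neg h1, if_neg (by push_neg; intro x hx; exact h2 x hx), if_pos h3]

lemma rank_eq_three (hbc : b ≤ c) (h1 : ¬ ∀ ⦃x y⦄, K.Adj x y → x.val = 0 ∨ y.val = 0)
    (h2 : ∀ x ∈ K.verts, x.val < b) : rank b c K = 3 := by
  unfold rank
  rw [if_neg h1, if_neg (by push_neg; intro x hx; have := h2 x hx; omega),
    if_neg (by push_neg; intro x hx; exact h2 x hx)]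

end S6Aux

/-- If `a ≤ b ≤ c` and `a + b ≥ c + 2`, then `N(K_{r_1,…,r_s}, K_1 ∨ (K_{a-1} + K_{b-1}))
≤ N(K_{r_1,…,r_s}, K_1 ∨ (K_{c-1} + K_{a+b-c-1}))`. -/
theorem statement_6 (a b c s : ℕ) (r : Fin s → ℕ)
    (ha : 0 < a) (hb : 0 < b) (hc : 0 < c) (hs : 0 < s) (hr : ∀ i, 0 < r i)
    (hab : a ≤ b) (hbc : b ≤ c) (habc : c + 2 ≤ a + b) :
    _root_.copyCount (KR r) (joinTwoCliques a b) ≤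
      _root_.copyCount (KR r) (joinTwoCliques c (a + b - c)) := by
  classical
  have hc2 : 2 ≤ c := by omega
  set d := a + b - c with hd_def
  have hd2 : 2 ≤ d := by omega
  have hda : d ≤ a := by omega
  have hcd : c + d = a + b := by omega
  -- The four vertex relabelling maps, given by their value specifications.
  obtain ⟨fI, sI⟩ : ∃ f : Fin (a + b - 1) → Fin (c + d - 1),
      ∀ v, (f v).val = v.val :=
    ⟨fun v => ⟨v.val, by have := v.isLt; omega⟩, fun v => rfl⟩
  obtain ⟨fR, sR0, sR1⟩ : ∃ f : Fin (a + b - 1) → Fin (c + d - 1),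
      (∀ v : Fin (a + b - 1), v.val = 0 → (f v).val = 0) ∧
      (∀ v : Fin (a + b - 1), v.val ≠ 0 → v.val < d → (f v).val = c - 1 + v.val) := by
    refine ⟨fun v => if h : v.val = 0 then ⟨0, by omega⟩
      else ⟨min (c - 1 + v.val) (c + d - 2), by omega⟩, ?_, ?_⟩
    · intro v hv; simp [hv]
    · intro v hv hvd; simp only [dif_neg hv]; simp; omega
  obtain ⟨fT, sT0, sT1⟩ : ∃ f : Fin (a + b - 1) → Fin (c + d - 1),
      (∀ v : Fin (a + b - 1), v.val < d → (f v).val = v.val) ∧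
      (∀ v : Fin (a + b - 1), d ≤ v.val → v.val < a → (f v).val = v.val + (c - a)) := by
    refine ⟨fun v => if h : v.val < d then ⟨v.val, by omega⟩
      else ⟨min (v.val + (c - a)) (c + d - 2), by omega⟩, ?_, ?_⟩
    · intro v hv; simp [hv]
    · intro v hv hva; simp only [dif_neg (by omega : ¬ v.val < d)]; simp; omega
  obtain ⟨fP, sP⟩ : ∃ f : Fin (a + b - 1) → Fin (c + d - 1),
      ∀ v, (f v).val = v.val - (a - 1) :=
    ⟨fun v => ⟨v.val - (a - 1), by have := v.isLt; omega⟩, fun v => rfl⟩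
  -- Injectivity of the maps on their regions.
  have injI : Set.InjOn fI Set.univ := by
    intro u _ v _ h
    have h' := congrArg Fin.val h
    rw [sI, sI] at h'
    exact Fin.val_injective h'
  have injR : Set.InjOn fR {v : Fin (a + b - 1) | v.val < d} := by
    intro u hu v hv h
    simp only [Set.mem_setOf_eq] at hu hv
    have h' := congrArg Fin.val h
    apply Fin.val_injective
    rcases eq_or_ne u.val 0 with h0 | h0 <;> rcases eq_or_ne v.val 0 with h1 | h1
    · omega
    · rw [sR0 u h0, sR1 v h1 hv] at h'; omega
    · rw [sR1 u h0 hu, sR0 v h1] at h'; omega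
    · rw [sR1 u h0 hu, sR1 v h1 hv] at h'; omega
  have injT : Set.InjOn fT {v : Fin (a + b - 1) | v.val < a} := by
    intro u hu v hv h
    simp only [Set.mem_setOf_eq] at hu hv
    have h' := congrArg Fin.val h
    apply Fin.val_injective
    rcases lt_or_ge u.val d with h0 | h0 <;> rcases lt_or_ge v.val d with h1 | h1
    · rw [sT0 u h0, sT0 v h1] at h'; omega
    · rw [sT0 u h0, sT1 v h1 hv] at h'; omega
    · rw [sT1 u h0 hu, sT0 v h1] at h'; omega
    · rw [sT1 u h0 hu, sT1 v h1 hv] at h'; omega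
  have injP : Set.InjOn fP {v : Fin (a + b - 1) | v.val = 0 ∨ a ≤ v.val} := by
    intro u hu v hv h
    simp only [Set.mem_setOf_eq] at hu hv
    have h' := congrArg Fin.val h
    rw [sP, sP] at h'
    exact Fin.val_injective (by omega)
  -- The maps send edges of copies (in the relevant case) to edges of the target.
  have adjI : ∀ K : (joinTwoCliques a b).Subgraph,
      (∀ ⦃u v⦄, K.Adj u v → u.val = 0 ∨ v.val = 0) →
      ∀ ⦃u v⦄, K.Adj u v → (joinTwoCliques c d).Adj (fI u) (fI v) := by
    intro K h1 u v huv
    have hne : u.val ≠ v.val := (S6Aux.jtc_adj.mp (K.adj_sub huv)).1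
    have h0 := h1 huv
    rw [S6Aux.jtc_adj, sI, sI]
    omega
  have adjR : ∀ K : (joinTwoCliques a b).Subgraph, (∀ v ∈ K.verts, v.val < d) →
      ∀ ⦃u v⦄, K.Adj u v → (joinTwoCliques c d).Adj (fR u) (fR v) := by
    intro K h2 u v huv
    have hne : u.val ≠ v.val := (S6Aux.jtc_adj.mp (K.adj_sub huv)).1
    have hu := h2 u (K.edge_vert huv)
    have hv := h2 v (K.edge_vert (K.adj_symm huv))
    rw [S6Aux.jtc_adj]
    rcases eq_or_ne u.val 0 with h0 | h0 <;> rcases eq_or_ne v.val 0 with h1 | h1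
    · omega
    · rw [sR0 u h0, sR1 v h1 hv]; omega
    · rw [sR1 u h0 hu, sR0 v h1]; omega
    · rw [sR1 u h0 hu, sR1 v h1 hv]; omega
  have adjT : ∀ K : (joinTwoCliques a b).Subgraph, (∀ v ∈ K.verts, v.val < a) →
      ∀ ⦃u v⦄, K.Adj u v → (joinTwoCliques c d).Adj (fT u) (fT v) := by
    intro K h3 u v huv
    have hne : u.val ≠ v.val := (S6Aux.jtc_adj.mp (K.adj_sub huv)).1
    have hu := h3 u (K.edge_vert huv)
    have hv := h3 v (K.edge_vert (K.adj_symm huv))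
    rw [S6Aux.jtc_adj]
    rcases lt_or_ge u.val d with h0 | h0 <;> rcases lt_or_ge v.val d with h1 | h1
    · rw [sT0 u h0, sT0 v h1]; omega
    · rw [sT0 u h0, sT1 v h1 hv]; omega
    · rw [sT1 u h0 hu, sT0 v h1]; omega
    · rw [sT1 u h0 hu, sT1 v h1 hv]; omega
  have adjP : ∀ K : (joinTwoCliques a b).Subgraph,
      (∀ v ∈ K.verts, v.val = 0 ∨ a ≤ v.val) →
      ∀ ⦃u v⦄, K.Adj u v → (joinTwoCliques c d).Adj (fP u) (fP v) := by
    intro K hreg u v huv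
    have hne : u.val ≠ v.val := (S6Aux.jtc_adj.mp (K.adj_sub huv)).1
    have hu := hreg u (K.edge_vert huv)
    have hv := hreg v (K.edge_vert (K.adj_symm huv))
    have hu' := u.isLt
    have hv' := v.isLt
    rw [S6Aux.jtc_adj, sP, sP]
    omega
  -- Coverage: a copy not fitting in either clique has all edges through the apex.
  have hreg4 : ∀ KK : {K : (joinTwoCliques a b).Subgraph // Nonempty (K.coe ≃g KR r)},
      ¬(∀ ⦃u v⦄, KK.1.Adj u v → u.val = 0 ∨ v.val = 0) →
      ¬(∀ v ∈ KK.1.verts, v.val < a) →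
      ∀ v ∈ KK.1.verts, v.val = 0 ∨ a ≤ v.val := by
    intro KK h1 h3 v hv
    by_contra hcon
    push_neg at hcon h3
    obtain ⟨w, hw, hwa⟩ := h3
    exact h1 (S6Aux.coverage KK.2.some hv hw hcon.1 hcon.2 hwa)
  -- Finiteness of the target collection.
  haveI finSub : Finite (joinTwoCliques c d).Subgraph :=
    Finite.of_injective (fun K : (joinTwoCliques c d).Subgraph => (K.verts, K.Adj))
      (fun K L h => SimpleGraph.Subgraph.ext (congrArg Prod.fst h) (congrArg Prod.snd h))
  unfold _root_.copyCount
  refine Nat.card_le_card_of_injective _ (S6Aux.glue_injective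
    (fun KK : {K : (joinTwoCliques a b).Subgraph // Nonempty (K.coe ≃g KR r)} =>
      ∀ ⦃u v⦄, KK.1.Adj u v → u.val = 0 ∨ v.val = 0)
    (fun KK => ∀ v ∈ KK.1.verts, v.val < d)
    (fun KK => ∀ v ∈ KK.1.verts, v.val < a)
    (fun KK h1 =>
      (⟨S6Aux.push KK.1 fI (adjI KK.1 h1), KK.2.elim fun e =>
        ⟨(S6Aux.pushIso KK.1 fI (adjI KK.1 h1) (injI.mono (Set.subset_univ _))).symm.trans e⟩⟩ :
        {K : (joinTwoCliques c d).Subgraph // Nonempty (K.coe ≃g KR r)}))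
    (fun KK h1 h2 =>
      ⟨S6Aux.push KK.1 fR (adjR KK.1 h2), KK.2.elim fun e =>
        ⟨(S6Aux.pushIso KK.1 fR (adjR KK.1 h2) (injR.mono h2)).symm.trans e⟩⟩)
    (fun KK h1 h2 h3 =>
      ⟨S6Aux.push KK.1 fT (adjT KK.1 h3), KK.2.elim fun e =>
        ⟨(S6Aux.pushIso KK.1 fT (adjT KK.1 h3) (injT.mono h3)).symm.trans e⟩⟩)
    (fun KK h1 h2 h3 =>
      ⟨S6Aux.push KK.1 fP (adjP KK.1 (hreg4 KK h1 h3)), KK.2.elim fun e =>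
        ⟨(S6Aux.pushIso KK.1 fP (adjP KK.1 (hreg4 KK h1 h3))
          (injP.mono (hreg4 KK h1 h3))).symm.trans e⟩⟩)
    (fun K' => S6Aux.rank b c K'.1)
    ?_ ?_ ?_ ?_ ?_ ?_ ?_ ?_)
  -- rank of piece 0 images
  · intro KK h1
    apply S6Aux.rank_eq_zero
    intro x y hxy
    obtain ⟨u, v, huv, rfl, rfl⟩ := hxy
    rcases h1 huv with h | h
    · exact Or.inl (by rw [sI]; exact h)
    · exact Or.inr (by rw [sI]; exact h)
  -- rank of piece 1 images
  · intro KK h1 h2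
    obtain ⟨u, v, huv, hu0, hv0⟩ : ∃ u v, KK.1.Adj u v ∧ u.val ≠ 0 ∧ v.val ≠ 0 := by
      by_contra hcon
      push_neg at hcon
      exact h1 fun u v huv => or_iff_not_imp_left.mpr (hcon u v huv)
    have hu := h2 u (KK.1.edge_vert huv)
    have hv := h2 v (KK.1.edge_vert (KK.1.adj_symm huv))
    apply S6Aux.rank_eq_one
    · intro hcon
      rcases hcon (show (S6Aux.push KK.1 fR (adjR KK.1 h2)).Adj (fR u) (fR v) from
          ⟨u, v, huv, rfl, rfl⟩) with h | h
      · rw [sR1 u hu0 hu] at h; omega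
      · rw [sR1 v hv0 hv] at h; omega
    · exact ⟨fR u, ⟨u, KK.1.edge_vert huv, rfl⟩, by rw [sR1 u hu0 hu]; omega⟩
  -- rank of piece 2 images
  · intro KK h1 h2 h3
    obtain ⟨u, v, huv, hu0, hv0⟩ : ∃ u v, KK.1.Adj u v ∧ u.val ≠ 0 ∧ v.val ≠ 0 := by
      by_contra hcon
      push_neg at hcon
      exact h1 fun u v huv => or_iff_not_imp_left.mpr (hcon u v huv)
    replace h2 : ¬ ∀ v ∈ KK.1.verts, v.val < d := h2
    push_neg at h2
    obtain ⟨w, hw, hwd⟩ := h2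
    have hu := h3 u (KK.1.edge_vert huv)
    have hv := h3 v (KK.1.edge_vert (KK.1.adj_symm huv))
    apply S6Aux.rank_eq_two
    · intro hcon
      rcases hcon (show (S6Aux.push KK.1 fT (adjT KK.1 h3)).Adj (fT u) (fT v) from
          ⟨u, v, huv, rfl, rfl⟩) with h | h
      · rcases lt_or_ge u.val d with h0 | h0
        · rw [sT0 u h0] at h; omega
        · rw [sT1 u h0 hu] at h; omega
      · rcases lt_or_ge v.val d with h0 | h0
        · rw [sT0 v h0] at h; omega
        · rw [sT1 v h0 hv] at h; omega
    · intro x hx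
      obtain ⟨z, hz, rfl⟩ := hx
      have hza := h3 z hz
      rcases lt_or_ge z.val d with h0 | h0
      · rw [sT0 z h0]; omega
      · rw [sT1 z h0 hza]; omega
    · exact ⟨fT w, ⟨w, hw, rfl⟩, by rw [sT1 w hwd (h3 w hw)]; omega⟩
  -- rank of piece 3 images
  · intro KK h1 h2 h3
    have hreg := hreg4 KK h1 h3
    obtain ⟨u, v, huv, hu0, hv0⟩ : ∃ u v, KK.1.Adj u v ∧ u.val ≠ 0 ∧ v.val ≠ 0 := by
      by_contra hcon
      push_neg at hcon
      exact h1 fun u v huv => or_iff_not_imp_left.mpr (hcon u v huv)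
    have hu : a ≤ u.val := by
      rcases hreg u (KK.1.edge_vert huv) with h | h
      · omega
      · exact h
    have hv : a ≤ v.val := by
      rcases hreg v (KK.1.edge_vert (KK.1.adj_symm huv)) with h | h
      · omega
      · exact h
    apply S6Aux.rank_eq_three hbc
    · intro hcon
      rcases hcon (show (S6Aux.push KK.1 fP (adjP KK.1 hreg)).Adj (fP u) (fP v) from
          ⟨u, v, huv, rfl, rfl⟩) with h | h
      · rw [sP u] at h; omega
      · rw [sP v] at h; omega
    · intro x hx
      obtain ⟨z, hz, rfl⟩ := hx
      have := z.isLt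
      rw [sP z]; omega
  -- injectivity of piece 0
  · intro K L hK hL h
    exact Subtype.ext (S6Aux.push_injective injI (Set.subset_univ _) (Set.subset_univ _)
      (adjI K.1 hK) (adjI L.1 hL) (congrArg Subtype.val h))
  -- injectivity of piece 1
  · intro K L hK hK' hL hL' h
    exact Subtype.ext (S6Aux.push_injective injR hK' hL'
      (adjR K.1 hK') (adjR L.1 hL') (congrArg Subtype.val h))
  -- injectivity of piece 2
  · intro K L h1 h2 h3 h1' h2' h3' h
    exact Subtype.ext (S6Aux.push_injective injT h3 h3'
      (adjT K.1 h3) (adjT L.1 h3') (congrArg Subtype.val h))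
  -- injectivity of piece 3
  · intro K L h1 h2 h3 h1' h2' h3' h
    exact Subtype.ext (S6Aux.push_injective injP (hreg4 K h1 h3) (hreg4 L h1' h3')
      (adjP K.1 (hreg4 K h1 h3)) (adjP L.1 (hreg4 L h1' h3')) (congrArg Subtype.val h))
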